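/- Let C be an invertible l×l matrix over ℚ, n a natural number, Φ := (-1)^n · Cᵀ · C⁻¹, and define the quadratic form q(x) := xᵀ · (C⁻¹)ᵀ · x. Then for every integer m (positive or negative) and every x ∈ ℚ^l, q(Φ^m x) = q(x). In particular, Φ maps roots (vectors with q(x) = 1) bijectively onto roots. -/

import Mathlib

open Matrix

private lemma aux_dot {l : ℕ} (M A : Matrix (Fin l) (Fin l) ℚ) (x : Fin l → ℚ) :
    (M.mulVec x) ⬝ᵥ (A.mulVec (M.mulVec x)) = x ⬝ᵥ ((M.transpose * A * M).mulVec x) := by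
  simp only [← mulVec_mulVec, dotProduct_mulVec, vecMul_transpose]

/-- The Euler quadratic form is invariant under all integer powers of the Coxeter
transformation; in particular Φ maps roots bijectively onto roots. -/
theorem stmt_2 (l n : ℕ) (C : Matrix (Fin l) (Fin l) ℚ) (hC : IsUnit C.det)
    (Φu : (Matrix (Fin l) (Fin l) ℚ)ˣ)
    (hΦ : (Φu : Matrix (Fin l) (Fin l) ℚ) = (-1 : ℚ) ^ n • (C.transpose * C⁻¹)) :
    (∀ (m : ℤ) (x : Fin l → ℚ),
        (((Φu ^ m : (Matrix (Fin l) (Fin l) ℚ)ˣ) : Matrix (Fin l) (Fin l) ℚ).mulVec x) ⬝ᵥ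
            ((C⁻¹).transpose.mulVec
              (((Φu ^ m : (Matrix (Fin l) (Fin l) ℚ)ˣ) : Matrix (Fin l) (Fin l) ℚ).mulVec x)) =
          x ⬝ᵥ ((C⁻¹).transpose.mulVec x)) ∧
      Set.BijOn (fun x => ((Φu : Matrix (Fin l) (Fin l) ℚ)).mulVec x)
        {x : Fin l → ℚ | x ⬝ᵥ ((C⁻¹).transpose.mulVec x) = 1}
        {x : Fin l → ℚ | x ⬝ᵥ ((C⁻¹).transpose.mulVec x) = 1} := by
  have hinv : C * C⁻¹ = 1 := mul_nonsing_inv C hC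
  have hεsq : ((-1 : ℚ) ^ n) * ((-1 : ℚ) ^ n) = 1 := by
    rcases Nat.even_or_odd n with h | h
    · rw [h.neg_one_pow]; norm_num
    · rw [h.neg_one_pow]; norm_num
  have h1 : (C⁻¹)ᵀ * Cᵀ = 1 := by rw [← transpose_mul, hinv, transpose_one]
  have key : (Φu : Matrix (Fin l) (Fin l) ℚ)ᵀ * (C⁻¹)ᵀ * (Φu : Matrix (Fin l) (Fin l) ℚ)
      = (C⁻¹)ᵀ := by
    rw [hΦ, transpose_smul, transpose_mul, transpose_transpose]
    simp only [smul_mul_assoc, mul_smul_comm, smul_smul]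
    rw [hεsq, one_smul]
    have h2 : (C⁻¹)ᵀ * (Cᵀ * C⁻¹) = C⁻¹ := by rw [← mul_assoc, h1, one_mul]
    calc (C⁻¹)ᵀ * C * (C⁻¹)ᵀ * (Cᵀ * C⁻¹)
        = (C⁻¹)ᵀ * (C * ((C⁻¹)ᵀ * (Cᵀ * C⁻¹))) := by simp only [mul_assoc]
      _ = (C⁻¹)ᵀ := by rw [h2, hinv, mul_one]
  have hΦΦ : (Φu : Matrix (Fin l) (Fin l) ℚ) * ((Φu⁻¹ : (Matrix (Fin l) (Fin l) ℚ)ˣ) :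
      Matrix (Fin l) (Fin l) ℚ) = 1 := by exact_mod_cast Φu.mul_inv
  have keyinv : ((Φu⁻¹ : (Matrix (Fin l) (Fin l) ℚ)ˣ) : Matrix (Fin l) (Fin l) ℚ)ᵀ * (C⁻¹)ᵀ *
      ((Φu⁻¹ : (Matrix (Fin l) (Fin l) ℚ)ˣ) : Matrix (Fin l) (Fin l) ℚ) = (C⁻¹)ᵀ := by
    calc (↑Φu⁻¹ : Matrix (Fin l) (Fin l) ℚ)ᵀ * (C⁻¹)ᵀ * ↑Φu⁻¹
        = (↑Φu⁻¹ : Matrix (Fin l) (Fin l) ℚ)ᵀ *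
            ((Φu : Matrix (Fin l) (Fin l) ℚ)ᵀ * (C⁻¹)ᵀ * ↑Φu) * ↑Φu⁻¹ := by rw [key]
      _ = ((Φu : Matrix (Fin l) (Fin l) ℚ) * ↑Φu⁻¹)ᵀ * (C⁻¹)ᵀ *
            ((Φu : Matrix (Fin l) (Fin l) ℚ) * ↑Φu⁻¹) := by
          simp only [transpose_mul, mul_assoc]
      _ = (C⁻¹)ᵀ := by rw [hΦΦ, transpose_one, one_mul, mul_one]
  have main : ∀ m : ℤ,
      ((Φu ^ m : (Matrix (Fin l) (Fin l) ℚ)ˣ) : Matrix (Fin l) (Fin l) ℚ)ᵀ * (C⁻¹)ᵀ *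
        ((Φu ^ m : (Matrix (Fin l) (Fin l) ℚ)ˣ) : Matrix (Fin l) (Fin l) ℚ) = (C⁻¹)ᵀ := by
    intro m
    induction m using Int.induction_on with
    | zero => simp
    | succ k ih =>
        rw [show ((k : ℤ) + 1) = (k : ℤ) + 1 from rfl, _root_.zpow_add_one, Units.val_mul,
          transpose_mul]
        calc (Φu : Matrix (Fin l) (Fin l) ℚ)ᵀ * (↑(Φu ^ (k : ℤ)))ᵀ * (C⁻¹)ᵀ *
              (↑(Φu ^ (k : ℤ)) * ↑Φu)
            = (Φu : Matrix (Fin l) (Fin l) ℚ)ᵀ *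
                ((↑(Φu ^ (k : ℤ)))ᵀ * (C⁻¹)ᵀ * ↑(Φu ^ (k : ℤ))) * ↑Φu := by
              simp only [mul_assoc]
          _ = (C⁻¹)ᵀ := by rw [ih, key]
    | pred k ih =>
        rw [show (-(k : ℤ) - 1) = (-(k : ℤ)) - 1 from rfl, _root_.zpow_sub_one, Units.val_mul,
          transpose_mul]
        calc ((Φu⁻¹ : (Matrix (Fin l) (Fin l) ℚ)ˣ) : Matrix (Fin l) (Fin l) ℚ)ᵀ *
              (↑(Φu ^ (-(k : ℤ))))ᵀ * (C⁻¹)ᵀ * (↑(Φu ^ (-(k : ℤ))) * ↑Φu⁻¹)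
            = ((Φu⁻¹ : (Matrix (Fin l) (Fin l) ℚ)ˣ) : Matrix (Fin l) (Fin l) ℚ)ᵀ *
                ((↑(Φu ^ (-(k : ℤ))))ᵀ * (C⁻¹)ᵀ * ↑(Φu ^ (-(k : ℤ)))) * ↑Φu⁻¹ := by
              simp only [mul_assoc]
          _ = (C⁻¹)ᵀ := by rw [ih, keyinv]
  have qinv : ∀ (m : ℤ) (x : Fin l → ℚ),
      (((Φu ^ m : (Matrix (Fin l) (Fin l) ℚ)ˣ) : Matrix (Fin l) (Fin l) ℚ).mulVec x) ⬝ᵥ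
          ((C⁻¹).transpose.mulVec
            (((Φu ^ m : (Matrix (Fin l) (Fin l) ℚ)ˣ) : Matrix (Fin l) (Fin l) ℚ).mulVec x)) =
        x ⬝ᵥ ((C⁻¹).transpose.mulVec x) := by
    intro m x
    rw [aux_dot, main m]
  refine ⟨qinv, ?_, ?_, ?_⟩
  · intro x hx
    have h := qinv 1 x
    rw [zpow_one] at h
    exact h.trans hx
  · intro x _ y _ hxy
    have := congrArg (fun v => ((Φu⁻¹ : (Matrix (Fin l) (Fin l) ℚ)ˣ) :
      Matrix (Fin l) (Fin l) ℚ).mulVec v) hxy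
    have hΦΦ' : ((Φu⁻¹ : (Matrix (Fin l) (Fin l) ℚ)ˣ) : Matrix (Fin l) (Fin l) ℚ) *
        (Φu : Matrix (Fin l) (Fin l) ℚ) = 1 := by exact_mod_cast Φu.inv_mul
    simpa only [mulVec_mulVec, hΦΦ', one_mulVec] using this
  · intro y hy
    refine ⟨((Φu⁻¹ : (Matrix (Fin l) (Fin l) ℚ)ˣ) : Matrix (Fin l) (Fin l) ℚ).mulVec y, ?_, ?_⟩
    · have h := qinv (-1) y
      rw [_root_.zpow_neg_one] at h
      exact h.trans hy
    · simp only [mulVec_mulVec, hΦΦ, one_mulVec]
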